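/- arXiv:1505.07223 — 2 statements merged into one kernel-verified Lean document; each statement's English description precedes it below -/
import Mathlib

section
/- Let l ≥ 1 and let A₀ be the type-D structure over the torus algebra 𝒜 (a 'horizontal chain') with basis {η, λ₁, …, λ_l, η′} and δ¹η = ρ₃ ⊗ λ₁, δ¹λ_m = ρ₂₃ ⊗ λ_{m+1} for 1 ≤ m ≤ l−1, δ¹λ_l = ρ₂ ⊗ η′, δ¹η′ = 0. Define φ : A₀ → 𝒜 ⊗ A₀ by φ(η) = 1 ⊗ η, φ(λ₁) = 1 ⊗ λ₁ + ρ₂ ⊗ η, φ(λ_m) = 1 ⊗ λ_m + 1 ⊗ λ_{m−1} for 2 ≤ m ≤ l, and φ(η′) = 1 ⊗ η′ + ρ₃ ⊗ λ_l. Then φ is a chain map, and there exists an integer ν ≥ 1 such that the ν-fold composite φ ∘ ⋯ ∘ φ equals the identity morphism id_{A₀}; consequently the direct limit of the direct system A₀ →^φ A₀ →^φ ⋯ is isomorphic to A₀. -/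
/-- The torus algebra: the 8-dimensional `F₂`-algebra with basis
`{ι₀, ι₁, ρ₁, ρ₂, ρ₃, ρ₁₂, ρ₂₃, ρ₁₂₃}`, encoded by its full multiplication table. -/
structure TorusAlg (A : Type) [Ring A] [Algebra (ZMod 2) A] where
  i0 : A
  i1 : A
  r1 : A
  r2 : A
  r3 : A
  r12 : A
  r23 : A
  r123 : A
  basis_indep : LinearIndependent (ZMod 2) ![i0, i1, r1, r2, r3, r12, r23, r123]
  basis_span : Submodule.span (ZMod 2)
      ({i0, i1, r1, r2, r3, r12, r23, r123} : Set A) = ⊤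
  sum_idem : i0 + i1 = 1
  i0_i0 : i0 * i0 = i0
  i1_i1 : i1 * i1 = i1
  i0_i1 : i0 * i1 = 0
  i1_i0 : i1 * i0 = 0
  i0_r1 : i0 * r1 = r1
  r1_i1 : r1 * i1 = r1
  i1_r2 : i1 * r2 = r2
  r2_i0 : r2 * i0 = r2
  i0_r3 : i0 * r3 = r3
  r3_i1 : r3 * i1 = r3
  i0_r12 : i0 * r12 = r12
  r12_i0 : r12 * i0 = r12
  i1_r23 : i1 * r23 = r23
  r23_i1 : r23 * i1 = r23
  i0_r123 : i0 * r123 = r123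
  r123_i1 : r123 * i1 = r123
  r1_r2 : r1 * r2 = r12
  r2_r3 : r2 * r3 = r23
  r1_r23 : r1 * r23 = r123
  r12_r3 : r12 * r3 = r123
  r1_r1 : r1 * r1 = 0
  r1_r3 : r1 * r3 = 0
  r1_r12 : r1 * r12 = 0
  r1_r123 : r1 * r123 = 0
  r2_r1 : r2 * r1 = 0
  r2_r2 : r2 * r2 = 0
  r2_r12 : r2 * r12 = 0
  r2_r23 : r2 * r23 = 0
  r2_r123 : r2 * r123 = 0
  r3_r1 : r3 * r1 = 0
  r3_r2 : r3 * r2 = 0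
  r3_r3 : r3 * r3 = 0
  r3_r12 : r3 * r12 = 0
  r3_r23 : r3 * r23 = 0
  r3_r123 : r3 * r123 = 0
  r12_r1 : r12 * r1 = 0
  r12_r2 : r12 * r2 = 0
  r12_r12 : r12 * r12 = 0
  r12_r23 : r12 * r23 = 0
  r12_r123 : r12 * r123 = 0
  r23_r1 : r23 * r1 = 0
  r23_r2 : r23 * r2 = 0
  r23_r3 : r23 * r3 = 0
  r23_r12 : r23 * r12 = 0
  r23_r23 : r23 * r23 = 0
  r23_r123 : r23 * r123 = 0
  r123_r1 : r123 * r1 = 0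
  r123_r2 : r123 * r2 = 0
  r123_r3 : r123 * r3 = 0
  r123_r12 : r123 * r12 = 0
  r123_r23 : r123 * r23 = 0
  r123_r123 : r123 * r123 = 0

variable {A : Type} [Ring A] [Algebra (ZMod 2) A]

/-- Composition of morphisms of type-D structures, in matrix form. -/
def matComp {ι κ σ : Type} [Fintype κ] (F : ι → κ → A) (G : κ → σ → A) :
    ι → σ → A :=
  fun i s => ∑ j, F i j * G j s

/-- The identity morphism, in matrix form. -/
def matId {ι : Type} [DecidableEq ι] : ι → ι → A :=
  fun i j => if i = j then 1 else 0

/-- The differential of a morphism of type-D structures, in matrix form: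
`∂F = F · d_N + d_M · F`. -/
def matDiff {ι κ : Type} [Fintype ι] [Fintype κ]
    (dM : ι → ι → A) (dN : κ → κ → A) (F : ι → κ → A) : ι → κ → A :=
  fun i k => (∑ j, F i j * dN j k) + (∑ j, dM i j * F j k)

/-- The type-D structure equation `(μ ⊗ id) ∘ (id ⊗ δ¹) ∘ δ¹ = 0`, in matrix form. -/
def IsTypeD {ι : Type} [Fintype ι] (d : ι → ι → A) : Prop :=
  ∀ i k, (∑ j, d i j * d j k) = 0

/-- A morphism is a chain map when its differential vanishes. -/
def IsChainMap {ι κ : Type} [Fintype ι] [Fintype κ]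
    (dM : ι → ι → A) (dN : κ → κ → A) (F : ι → κ → A) : Prop :=
  matDiff dM dN F = 0

/-- Homotopy equivalence of two type-D structures, in matrix form:
chain maps `F`, `G` with `G ∘ F + id = ∂H` and `F ∘ G + id = ∂H'`. -/
def HtpyEquiv {ι κ : Type} [Fintype ι] [Fintype κ] [DecidableEq ι] [DecidableEq κ]
    (dM : ι → ι → A) (dN : κ → κ → A) : Prop :=
  ∃ (F : ι → κ → A) (G : κ → ι → A) (H : ι → ι → A) (H' : κ → κ → A),
    IsChainMap dM dN F ∧ IsChainMap dN dM G ∧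
    matComp F G + matId = matDiff dM dM H ∧
    matComp G F + matId = matDiff dN dN H'

/-- The `A`-linear map `𝒜 ⊗ M → 𝒜 ⊗ N` induced by a matrix-form morphism of
type-D structures, in the coordinates `𝒜 ⊗ M ≅ (ι → 𝒜)`:
`a ⊗ e_j ↦ Σ_k a·F j k ⊗ e_k`. -/
def matMap {ι κ : Type} [Fintype ι] (F : ι → κ → A) :
    (ι → A) →ₗ[A] (κ → A) where
  toFun v := fun k => ∑ j, v j * F j k
  map_add' u v := by
    funext k
    simp [add_mul, Finset.sum_add_distrib]
  map_smul' a v := by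
    funext k
    simp [Finset.mul_sum, mul_assoc]

/-- Iterated composition (`n`-fold power) of an endomorphism matrix;
`matPow F 0` is the identity morphism. -/
def matPow {ι : Type} [Fintype ι] [DecidableEq ι] (F : ι → ι → A) :
    ℕ → (ι → ι → A)
  | 0 => matId
  | n + 1 => matComp F (matPow F n)

/-- The differential of the horizontal chain `A₀` with basis
`{η = 0, λ₁ = 1, …, λ_l = l, η′ = l+1}`:
`δ¹η = ρ₃ ⊗ λ₁`, `δ¹λ_m = ρ₂₃ ⊗ λ_{m+1}` for `1 ≤ m ≤ l-1`,
`δ¹λ_l = ρ₂ ⊗ η′`, `δ¹η′ = 0`. -/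
def dH (T : TorusAlg A) (l : ℕ) : Fin (l + 2) → Fin (l + 2) → A :=
  fun i j =>
    if (i : ℕ) = 0 ∧ (j : ℕ) = 1 then T.r3
    else if 1 ≤ (i : ℕ) ∧ (i : ℕ) + 1 ≤ l ∧ (j : ℕ) = (i : ℕ) + 1 then T.r23
    else if (i : ℕ) = l ∧ (j : ℕ) = l + 1 then T.r2
    else 0

/-- The morphism `φ`: `φ(η) = 1 ⊗ η`, `φ(λ₁) = 1 ⊗ λ₁ + ρ₂ ⊗ η`,
`φ(λ_m) = 1 ⊗ λ_m + 1 ⊗ λ_{m-1}` for `2 ≤ m ≤ l`, `φ(η′) = 1 ⊗ η′ + ρ₃ ⊗ λ_l`. -/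
def fH (T : TorusAlg A) (l : ℕ) : Fin (l + 2) → Fin (l + 2) → A :=
  fun i j =>
    if (i : ℕ) = (j : ℕ) then 1
    else if (i : ℕ) = 1 ∧ (j : ℕ) = 0 then T.r2
    else if 2 ≤ (i : ℕ) ∧ (i : ℕ) ≤ l ∧ (j : ℕ) + 1 = (i : ℕ) then 1
    else if (i : ℕ) = l + 1 ∧ (j : ℕ) = l then T.r3
    else 0

/-- The directed system `𝒜 ⊗ A₀ → 𝒜 ⊗ A₀ → ⋯` induced by iterating `φ`. -/
noncomputable def connH (T : TorusAlg A) (l : ℕ) :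
    ∀ i j : ℕ, i ≤ j → (Fin (l + 2) → A) →ₗ[A] (Fin (l + 2) → A) :=
  fun i j _ => (matMap (fH T l) ^ (j - i) : Module.End A (Fin (l + 2) → A))


lemma char2 {A : Type} [Ring A] [Algebra (ZMod 2) A] (x : A) : x + x = 0 := by
  calc x + x = (1:ZMod 2)•x + (1:ZMod 2)•x := by rw [one_smul]
    _ = ((1+1 : ZMod 2))•x := (add_smul _ _ _).symm
    _ = (0:ZMod 2)•x := by rw [show ((1:ZMod 2)+1) = 0 by decide]
    _ = 0 := zero_smul _ _

lemma hd0 (T : TorusAlg A) (l : ℕ) (j k : Fin (l+2)) (h : (j:ℕ)+1 ≠ (k:ℕ)) :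
    dH T l j k = 0 := by
  simp only [dH]
  split_ifs <;> first | rfl | omega

lemma hf0 (T : TorusAlg A) (l : ℕ) (j k : Fin (l+2)) (h1 : (j:ℕ) ≠ (k:ℕ))
    (h2 : (k:ℕ)+1 ≠ (j:ℕ)) : fH T l j k = 0 := by
  simp only [fH]
  split_ifs <;> first | rfl | omega

set_option maxHeartbeats 2000000 in
lemma chainH (T : TorusAlg A) (l : ℕ) (hl : 1 ≤ l) :
    IsChainMap (dH T l) (dH T l) (fH T l) := by
  funext i k
  have hi2 := i.isLt
  have hk2 := k.isLt
  show (∑ j, fH T l i j * dH T l j k) + (∑ j, dH T l i j * fH T l j k) = (0 : A)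
  have S1z : (k:ℕ) = 0 → (∑ j, fH T l i j * dH T l j k) = 0 := fun hk =>
    Finset.sum_eq_zero (fun j _ => by rw [hd0 T l j k (by omega), mul_zero])
  have S2z : (i:ℕ) = l+1 → (∑ j, dH T l i j * fH T l j k) = 0 := fun hi =>
    Finset.sum_eq_zero (fun j _ => by
      rw [hd0 T l i j (by have := j.isLt; omega), zero_mul])
  have S1s : ∀ hk : (k:ℕ) ≠ 0, (∑ j, fH T l i j * dH T l j k) =
      fH T l i ⟨(k:ℕ)-1, by omega⟩ * dH T l ⟨(k:ℕ)-1, by omega⟩ k := fun hk =>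
    Fintype.sum_eq_single _ (fun j hj => by
      rw [hd0 T l j k (fun hc => hj (Fin.ext (by simp only [Fin.val_mk]; omega))), mul_zero])
  have S2s : ∀ hi : (i:ℕ) ≠ l+1, (∑ j, dH T l i j * fH T l j k) =
      dH T l i ⟨(i:ℕ)+1, by omega⟩ * fH T l ⟨(i:ℕ)+1, by omega⟩ k := fun hi =>
    Fintype.sum_eq_single _ (fun j hj => by
      rw [hd0 T l i j (fun hc => hj (Fin.ext (by simp only [Fin.val_mk]; omega))), zero_mul])
  by_cases hk : (k:ℕ) = 0 <;> by_cases hi : (i:ℕ) = l+1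
  · rw [S1z hk, S2z hi]; simp
  · rw [S1z hk, S2s hi, zero_add]
    clear S1z S2z S1s S2s
    simp only [dH, fH, Fin.val_mk, and_true, true_and]
    split_ifs <;>
      first | omega | simp only [one_mul, mul_one, T.r2_r3, T.r3_r2, zero_add,
        add_zero, zero_mul, mul_zero, char2]
  · rw [S1s hk, S2z hi, add_zero]
    clear S1z S2z S1s S2s
    simp only [dH, fH, Fin.val_mk, and_true, true_and]
    split_ifs <;>
      first | omega | simp only [one_mul, mul_one, T.r2_r3, T.r3_r2, zero_add,
        add_zero, zero_mul, mul_zero, char2]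
  · rw [S1s hk, S2s hi]
    clear S1z S2z S1s S2s
    have E1 : dH T l ⟨(k:ℕ)-1, by omega⟩ k
        = (if (k:ℕ) = 1 then T.r3 else if (k:ℕ) = l+1 then T.r2 else T.r23) := by
      simp only [dH, Fin.val_mk]; split_ifs <;> first | rfl | omega
    have E2 : fH T l i ⟨(k:ℕ)-1, by omega⟩
        = (if (i:ℕ)+1 = (k:ℕ) then 1 else if (i:ℕ) = (k:ℕ) ∧ 2 ≤ (i:ℕ) then 1
           else if (i:ℕ) = 1 ∧ (k:ℕ) = 1 then T.r2 else 0) := by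
      simp only [fH, Fin.val_mk]; split_ifs <;> first | rfl | omega
    have E3 : dH T l i ⟨(i:ℕ)+1, by omega⟩
        = (if (i:ℕ) = 0 then T.r3 else if (i:ℕ) = l then T.r2 else T.r23) := by
      simp only [dH, Fin.val_mk, and_true, true_and]; split_ifs <;> first | rfl | omega
    have E4 : fH T l ⟨(i:ℕ)+1, by omega⟩ k
        = (if (i:ℕ)+1 = (k:ℕ) then 1
           else if (i:ℕ) = (k:ℕ) ∧ (i:ℕ) ≤ l-1 ∧ 1 ≤ (i:ℕ) then 1
           else if (i:ℕ) = l ∧ (k:ℕ) = l then T.r3 else 0) := by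
      simp only [fH, Fin.val_mk]; split_ifs <;> first | rfl | omega
    rw [E1, E2, E3, E4]
    split_ifs <;>
      first | omega | simp only [one_mul, mul_one, T.r2_r3, T.r3_r2, zero_add,
        add_zero, zero_mul, mul_zero, char2]

lemma powH (T : TorusAlg A) (l : ℕ) :
    matPow (fH T l) (2^(l+2)) = matId := by
  set M : Matrix (Fin (l+2)) (Fin (l+2)) A := Matrix.of (fH T l) with hM
  set Nm : Matrix (Fin (l+2)) (Fin (l+2)) A := M - 1 with hNm
  have hN0 : ∀ i j : Fin (l+2), (j:ℕ)+1 ≠ (i:ℕ) → (i:ℕ) ≠ (j:ℕ) → Nm i j = 0 := by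
    intro i j h1 h2
    have : M i j = fH T l i j := rfl
    simp only [hNm, Matrix.sub_apply, this, hf0 T l i j h2 h1, Matrix.one_apply,
      if_neg (fun hc : i = j => h2 (by rw [hc]))]
    simp
  have hNd : ∀ i : Fin (l+2), Nm i i = 0 := by
    intro i
    have : M i i = fH T l i i := rfl
    simp [hNm, this, fH]
  have hNpow : ∀ n : ℕ, ∀ i j : Fin (l+2), (i:ℕ) < (j:ℕ) + n → (Nm ^ n) i j = 0 := by
    intro n
    induction n with
    | zero => intro i j h; rw [pow_zero, Matrix.one_apply, if_neg]; intro hc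
              exact absurd (congrArg Fin.val hc) (by omega)
    | succ n ih =>
      intro i j h
      rw [pow_succ', Matrix.mul_apply]
      apply Finset.sum_eq_zero
      intro m _
      by_cases hm : (m:ℕ)+1 = (i:ℕ)
      · rw [ih m j (by omega), mul_zero]
      · by_cases hm2 : (i:ℕ) = (m:ℕ)
        · rw [show i = m from Fin.ext hm2, hNd, zero_mul]
        · rw [hN0 i m hm hm2, zero_mul]
  have hnil : Nm ^ (l+2) = 0 := by
    ext i j
    exact (hNpow (l+2) i j (by have := i.isLt; omega)).trans rfl
  have h2z : ∀ X : Matrix (Fin (l+2)) (Fin (l+2)) A, X + X = 0 := by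
    intro X; ext i j; simp [char2]
  have key : ∀ s : ℕ, M ^ (2^s) = 1 + Nm ^ (2^s) := by
    intro s
    induction s with
    | zero => simp [hNm]
    | succ s ih =>
      have h2 : 2^(s+1) = 2^s * 2 := by rw [pow_succ]
      rw [h2, pow_mul, pow_mul, ih]
      set P := Nm ^ (2^s)
      have : (1 + P)^2 = 1 + (P + P) + P^2 := by noncomm_ring
      rw [this, h2z P, add_zero, sq]
  have hbig : Nm ^ (2^(l+2)) = 0 := by
    have hle : l+2 ≤ 2^(l+2) := le_of_lt Nat.lt_two_pow_self
    rw [show 2^(l+2) = (l+2) + (2^(l+2) - (l+2)) by omega, pow_add, hnil, zero_mul]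
  have hM1 : M ^ (2^(l+2)) = 1 := by rw [key, hbig, add_zero]
  have hmp : ∀ n : ℕ, matPow (fH T l) n = fun i j => (M ^ n) i j := by
    intro n
    induction n with
    | zero => funext i j; rw [pow_zero]; simp [matPow, matId, Matrix.one_apply]
    | succ n ih =>
      funext i j
      rw [show matPow (fH T l) (n+1) = matComp (fH T l) (matPow (fH T l) n) from rfl, ih]
      rw [pow_succ', Matrix.mul_apply]
      rfl
  rw [hmp, hM1]
  funext i j
  rw [Matrix.one_apply]
  rfl

lemma matMapComp {ι : Type} [Fintype ι] (F G : ι → ι → A) :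
    matMap (matComp F G) = (matMap G).comp (matMap F) := by
  refine LinearMap.ext fun v => funext fun s => ?_
  show ∑ j, v j * (∑ k, F j k * G k s) = ∑ k, (∑ j, v j * F j k) * G k s
  simp_rw [Finset.mul_sum, Finset.sum_mul, mul_assoc]
  exact Finset.sum_comm

lemma matMapId {ι : Type} [Fintype ι] [DecidableEq ι] :
    matMap (matId : ι → ι → A) = LinearMap.id := by
  refine LinearMap.ext fun v => funext fun s => ?_
  show ∑ j, v j * (if j = s then 1 else 0) = v s
  simp [mul_ite]

lemma matMapPow {ι : Type} [Fintype ι] [DecidableEq ι] (F : ι → ι → A) (n : ℕ) :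
    ((matMap F : Module.End A (ι → A)) ^ n) = matMap (matPow F n) := by
  induction n with
  | zero => rw [pow_zero, show matPow F 0 = matId from rfl, matMapId]; rfl
  | succ n ih =>
    rw [pow_succ, ih, show matPow F (n+1) = matComp F (matPow F n) from rfl,
      matMapComp]
    rfl


theorem statement8 (A : Type) [Ring A] [Algebra (ZMod 2) A] (T : TorusAlg A)
    (l : ℕ) (hl : 1 ≤ l) :
    -- `φ` is a chain map
    IsChainMap (dH T l) (dH T l) (fH T l) ∧
    -- some `ν`-fold composite of `φ` is the identity morphism
    (∃ ν : ℕ, 1 ≤ ν ∧ matPow (fH T l) ν = matId) ∧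
    -- consequently the direct limit of the direct system is isomorphic to `A₀`,
    -- compatibly with the induced differentials
    (∃ Dlim : Module.DirectLimit (R := A) (fun _ : ℕ => (Fin (l + 2) → A)) (connH T l) →ₗ[A]
          Module.DirectLimit (R := A) (fun _ : ℕ => (Fin (l + 2) → A)) (connH T l),
      (∀ (i : ℕ) (v : Fin (l + 2) → A),
        Dlim (Module.DirectLimit.of A ℕ (fun _ : ℕ => (Fin (l + 2) → A)) (connH T l) i v) =
          Module.DirectLimit.of A ℕ (fun _ : ℕ => (Fin (l + 2) → A)) (connH T l) i
            (matMap (dH T l) v)) ∧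
      ∃ e : Module.DirectLimit (R := A) (fun _ : ℕ => (Fin (l + 2) → A)) (connH T l) ≃ₗ[A]
          (Fin (l + 2) → A),
        ∀ z, e (Dlim z) = matMap (dH T l) (e z)) := by
  refine ⟨chainH T l hl, ⟨2^(l+2), Nat.one_le_two_pow, powH T l⟩, ?_⟩
  set V := (Fin (l + 2) → A)
  set φ : Module.End A V := matMap (fH T l) with hφ
  set D : Module.End A V := matMap (dH T l) with hD
  set ν : ℕ := 2^(l+2) with hν
  have hν1 : 1 ≤ ν := Nat.one_le_two_pow
  have hconn : ∀ (i j : ℕ) (h : i ≤ j) (x : V), connH T l i j h x = (φ^(j-i)) x :=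
    fun _ _ _ _ => rfl
  have hφν : φ^ν = 1 := by
    rw [hφ, matMapPow, powH T l, matMapId]; rfl
  -- φ commutes with D
  have h0 : matComp (fH T l) (dH T l) = matComp (dH T l) (fH T l) := by
    have hc := chainH T l hl
    funext i k
    have h1 : matComp (fH T l) (dH T l) i k + matComp (dH T l) (fH T l) i k = 0 :=
      congrFun (congrFun hc i) k
    have h2 := char2 (matComp (dH T l) (fH T l) i k)
    have h3 := congrArg (· + matComp (dH T l) (fH T l) i k) h1
    simpa [add_assoc, h2] using h3
  have hco : Commute φ D := by
    show φ * D = D * φ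
    calc φ * D = (matMap (matComp (dH T l) (fH T l)) : Module.End A V) := by
          rw [matMapComp]; rfl
      _ = (matMap (matComp (fH T l) (dH T l)) : Module.End A V) := by rw [h0]
      _ = D * φ := by rw [matMapComp]; rfl
  set ψ : Module.End A V := φ^(ν-1) with hψ
  have hcoψφ : Commute ψ φ := (Commute.refl φ).pow_left (ν-1)
  have hψφ : ψ * φ = 1 := by
    rw [hψ, ← pow_succ, show ν - 1 + 1 = ν by omega, hφν]
  have hφψ : φ * ψ = 1 := by
    rw [hψ, ← pow_succ', show ν - 1 + 1 = ν by omega, hφν]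
  have hcoD : ∀ n : ℕ, Commute (φ^n) D := fun n => hco.pow_left n
  -- the limit differential
  have hcompat : ∀ (i j : ℕ) (hij : i ≤ j) (x : V),
      ((Module.DirectLimit.of A ℕ (fun _ : ℕ => V) (connH T l) j).comp (D : V →ₗ[A] V))
          (connH T l i j hij x) =
        ((Module.DirectLimit.of A ℕ (fun _ : ℕ => V) (connH T l) i).comp (D : V →ₗ[A] V)) x := by
    intro i j hij x
    simp only [LinearMap.comp_apply]
    have h5 : D (connH T l i j hij x) = connH T l i j hij (D x) := by
      rw [hconn, hconn]
      exact LinearMap.congr_fun ((hcoD (j-i)).symm) x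
    rw [h5, Module.DirectLimit.of_f]
  refine ⟨Module.DirectLimit.lift A ℕ (fun _ : ℕ => V) (connH T l)
      (fun i => (Module.DirectLimit.of A ℕ (fun _ : ℕ => V) (connH T l) i).comp
        (D : V →ₗ[A] V)) hcompat, ?_, ?_⟩
  · intro i v
    erw [Module.DirectLimit.lift_of]; rfl
  · -- the equivalence
    have hg : ∀ (i j : ℕ) (hij : i ≤ j) (x : V),
        ((ψ^j : Module.End A V) : V →ₗ[A] V) (connH T l i j hij x) =
          ((ψ^i : Module.End A V) : V →ₗ[A] V) x := by
      intro i j hij x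
      rw [hconn]
      have h1 : (ψ^j) ((φ^(j-i)) x) = ((ψ^j) * (φ^(j-i))) x := rfl
      have h2 : (ψ^j) * (φ^(j-i)) = ψ^i := by
        calc (ψ^j) * (φ^(j-i)) = ψ^i * (ψ^(j-i) * φ^(j-i)) := by
              rw [← mul_assoc, ← pow_add, show i + (j-i) = j by omega]
          _ = ψ^i * (ψ*φ)^(j-i) := by rw [hcoψφ.mul_pow]
          _ = ψ^i := by rw [hψφ, one_pow, mul_one]
      rw [h1, h2]
    set glift := Module.DirectLimit.lift A ℕ (fun _ : ℕ => V) (connH T l)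
      (fun i => ((ψ^i : Module.End A V) : V →ₗ[A] V)) hg with hglift
    have hE1 : glift.comp (Module.DirectLimit.of A ℕ (fun _ : ℕ => V) (connH T l) 0)
        = LinearMap.id := by
      refine LinearMap.ext fun v => ?_
      simp only [LinearMap.comp_apply, hglift, Module.DirectLimit.lift_of, pow_zero,
        LinearMap.id_apply]
      rfl
    have hE2 : (Module.DirectLimit.of A ℕ (fun _ : ℕ => V) (connH T l) 0).comp glift
        = LinearMap.id := by
      refine LinearMap.ext fun z => ?_
      induction z using Module.DirectLimit.induction_on with
      | ih i v =>
        simp only [LinearMap.comp_apply, hglift, Module.DirectLimit.lift_of,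
          LinearMap.id_apply]
        have h3 : connH T l 0 i (Nat.zero_le i) (((ψ^i : Module.End A V)) v) = v := by
          rw [hconn]
          have h4 : (φ^(i-0)) (((ψ^i : Module.End A V)) v) = ((φ^i) * (ψ^i)) v := by
            rw [Nat.sub_zero]; rfl
          rw [h4, ← hcoψφ.symm.mul_pow, hφψ, one_pow]
          rfl
        conv_rhs => rw [← h3, Module.DirectLimit.of_f]
    refine ⟨LinearEquiv.ofLinear glift
      (Module.DirectLimit.of A ℕ (fun _ : ℕ => V) (connH T l) 0) hE1 hE2, ?_⟩
    intro z
    induction z using Module.DirectLimit.induction_on with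
    | ih i v =>
      simp only [LinearEquiv.ofLinear_apply, Module.DirectLimit.lift_of,
        LinearMap.comp_apply, hglift]
      erw [Module.DirectLimit.lift_of, LinearMap.comp_apply, Module.DirectLimit.lift_of,
        Module.DirectLimit.lift_of]
      exact LinearMap.congr_fun ((hcoD (ν-1)).pow_left i) v
end

section
/- Let l ≥ 1 and let A₀ be the type-D structure over the torus algebra 𝒜 (a 'vertical chain') with basis {ξ, κ₁, …, κ_l, ξ′} and δ¹ξ = ρ₁ ⊗ κ₁, δ¹κ₁ = 0, δ¹κ_m = ρ₂₃ ⊗ κ_{m−1} for 2 ≤ m ≤ l, δ¹ξ′ = ρ₁₂₃ ⊗ κ_l. Define φ : A₀ → 𝒜 ⊗ A₀ by φ(ξ) = 1 ⊗ ξ, φ(κ₁) = 1 ⊗ κ₁, φ(κ_m) = 1 ⊗ κ_m + 1 ⊗ κ_{m−1} for 2 ≤ m ≤ l, and φ(ξ′) = 1 ⊗ ξ′ + ρ₁ ⊗ κ_l. Then φ is a chain map, and there exists an integer ν ≥ 1 such that the ν-fold composite φ ∘ ⋯ ∘ φ equals the identity morphism id_{A₀}; consequently the direct limit of the direct system A₀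 →^φ A₀ →^φ ⋯ is isomorphic to A₀. -/
variable {A : Type} [Ring A] [Algebra (ZMod 2) A]

/-- The differential of the vertical chain `A₀` with basis
`{ξ = 0, κ₁ = 1, …, κ_l = l, ξ′ = l+1}`:
`δ¹ξ = ρ₁ ⊗ κ₁`, `δ¹κ₁ = 0`, `δ¹κ_m = ρ₂₃ ⊗ κ_{m-1}` for `2 ≤ m ≤ l`,
`δ¹ξ′ = ρ₁₂₃ ⊗ κ_l`. -/
def dV (T : TorusAlg A) (l : ℕ) : Fin (l + 2) → Fin (l + 2) → A :=
  fun i j =>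
    if (i : ℕ) = 0 ∧ (j : ℕ) = 1 then T.r1
    else if 2 ≤ (i : ℕ) ∧ (i : ℕ) ≤ l ∧ (j : ℕ) + 1 = (i : ℕ) then T.r23
    else if (i : ℕ) = l + 1 ∧ (j : ℕ) = l then T.r123
    else 0

/-- The morphism `φ`: `φ(ξ) = 1 ⊗ ξ`, `φ(κ₁) = 1 ⊗ κ₁`,
`φ(κ_m) = 1 ⊗ κ_m + 1 ⊗ κ_{m-1}` for `2 ≤ m ≤ l`, `φ(ξ′) = 1 ⊗ ξ′ + ρ₁ ⊗ κ_l`. -/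
def fV (T : TorusAlg A) (l : ℕ) : Fin (l + 2) → Fin (l + 2) → A :=
  fun i j =>
    if (i : ℕ) = (j : ℕ) then 1
    else if 2 ≤ (i : ℕ) ∧ (i : ℕ) ≤ l ∧ (j : ℕ) + 1 = (i : ℕ) then 1
    else if (i : ℕ) = l + 1 ∧ (j : ℕ) = l then T.r1
    else 0

/-- The directed system `𝒜 ⊗ A₀ → 𝒜 ⊗ A₀ → ⋯` induced by iterating `φ`. -/
noncomputable def connV (T : TorusAlg A) (l : ℕ) :
    ∀ i j : ℕ, i ≤ j → (Fin (l + 2) → A) →ₗ[A] (Fin (l + 2) → A) :=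
  fun i j _ => (matMap (fV T l) ^ (j - i) : Module.End A (Fin (l + 2) → A))

section Aux9

lemma aux9_one_add_one (A : Type) [Ring A] [Algebra (ZMod 2) A] : (1 : A) + 1 = 0 := by
  have h : ((1 : ZMod 2) + 1) = 0 := by decide
  calc (1 : A) + 1 = algebraMap (ZMod 2) A 1 + algebraMap (ZMod 2) A 1 := by rw [map_one]
    _ = algebraMap (ZMod 2) A ((1 : ZMod 2) + 1) := (map_add _ _ _).symm
    _ = 0 := by rw [h, map_zero]

lemma aux9_add_self {A : Type} [Ring A] [Algebra (ZMod 2) A] (a : A) : a + a = 0 := by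
  calc a + a = (1 + 1) * a := by rw [add_mul, one_mul]
    _ = 0 := by rw [aux9_one_add_one, zero_mul]

/-- The nilpotent part `N` of the morphism `φ = id + N`. -/
def nV (T : TorusAlg A) (l : ℕ) : Fin (l + 2) → Fin (l + 2) → A :=
  fun i j =>
    if 2 ≤ (i : ℕ) ∧ (i : ℕ) ≤ l ∧ (j : ℕ) + 1 = (i : ℕ) then 1
    else if (i : ℕ) = l + 1 ∧ (j : ℕ) = l then T.r1
    else 0

variable {T : TorusAlg A} {l : ℕ}

lemma dV_zero {i j : Fin (l + 2)} (h1 : ¬((i : ℕ) = 0 ∧ (j : ℕ) = 1))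
    (h2 : ¬(2 ≤ (i : ℕ) ∧ (i : ℕ) ≤ l ∧ (j : ℕ) + 1 = (i : ℕ)))
    (h3 : ¬((i : ℕ) = l + 1 ∧ (j : ℕ) = l)) : dV T l i j = 0 := by
  simp only [dV]; rw [if_neg h1, if_neg h2, if_neg h3]

lemma dV_r1 {i j : Fin (l + 2)} (h : (i : ℕ) = 0 ∧ (j : ℕ) = 1) : dV T l i j = T.r1 := by
  simp only [dV]; rw [if_pos h]

lemma dV_r23 {i j : Fin (l + 2)} (h : 2 ≤ (i : ℕ) ∧ (i : ℕ) ≤ l ∧ (j : ℕ) + 1 = (i : ℕ)) :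
    dV T l i j = T.r23 := by
  simp only [dV]; rw [if_neg (by omega), if_pos h]

lemma dV_r123 {i j : Fin (l + 2)} (h : (i : ℕ) = l + 1 ∧ (j : ℕ) = l) :
    dV T l i j = T.r123 := by
  simp only [dV]; rw [if_neg (by omega), if_neg (by omega), if_pos h]

lemma nV_zero {i j : Fin (l + 2)}
    (h2 : ¬(2 ≤ (i : ℕ) ∧ (i : ℕ) ≤ l ∧ (j : ℕ) + 1 = (i : ℕ)))
    (h3 : ¬((i : ℕ) = l + 1 ∧ (j : ℕ) = l)) : nV T l i j = 0 := by
  simp only [nV]; rw [if_neg h2, if_neg h3]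

lemma nV_one {i j : Fin (l + 2)} (h : 2 ≤ (i : ℕ) ∧ (i : ℕ) ≤ l ∧ (j : ℕ) + 1 = (i : ℕ)) :
    nV T l i j = 1 := by
  simp only [nV]; rw [if_pos h]

lemma nV_r1 {i j : Fin (l + 2)} (h : (i : ℕ) = l + 1 ∧ (j : ℕ) = l) : nV T l i j = T.r1 := by
  simp only [nV]; rw [if_neg (by omega), if_pos h]

lemma fV_decomp (T : TorusAlg A) (l : ℕ) :
    Matrix.of (fV T l) = 1 + Matrix.of (nV T l) := by
  ext i j
  simp only [Matrix.of_apply, Matrix.add_apply, Matrix.one_apply, fV, nV]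
  by_cases h : i = j
  · subst h
    rw [if_pos rfl, if_pos rfl, if_neg (by omega), if_neg (by omega), add_zero]
  · have hv : ¬((i : ℕ) = (j : ℕ)) := fun hh => h (Fin.val_injective hh)
    rw [if_neg hv, if_neg h, zero_add]

lemma comm_ND (T : TorusAlg A) (l : ℕ) (hl : 1 ≤ l) :
    Matrix.of (dV T l) * Matrix.of (nV T l) = Matrix.of (nV T l) * Matrix.of (dV T l) := by
  ext i k
  simp only [Matrix.mul_apply, Matrix.of_apply]
  have hi := i.isLt
  have hcases : (i : ℕ) = 0 ∨ (i : ℕ) = 1 ∨ (2 ≤ (i : ℕ) ∧ (i : ℕ) ≤ l) ∨ (i : ℕ) = l + 1 := by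
    omega
  rcases hcases with h0 | h1 | ⟨hi2, hil⟩ | hitop
  · -- i = 0 : both sides vanish
    rw [Finset.sum_eq_zero, Finset.sum_eq_zero]
    · intro j _
      rw [nV_zero (by omega) (by omega), zero_mul]
    · intro j _
      by_cases hj : (j : ℕ) = 1
      · rw [nV_zero (by omega) (by omega), mul_zero]
      · rw [dV_zero (by omega) (by omega) (by omega), zero_mul]
  · -- i = 1 : both sides vanish
    rw [Finset.sum_eq_zero, Finset.sum_eq_zero]
    · intro j _
      rw [nV_zero (by omega) (by omega), zero_mul]
    · intro j _
      rw [dV_zero (by omega) (by omega) (by omega), zero_mul]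
  · -- 2 ≤ i ≤ l
    set j0 : Fin (l + 2) := ⟨(i : ℕ) - 1, by omega⟩ with hj0
    have hj0v : (j0 : ℕ) = (i : ℕ) - 1 := rfl
    rw [Fintype.sum_eq_single j0 (fun j hj => by
      have hjv : (j : ℕ) ≠ (i : ℕ) - 1 := fun hh => hj (Fin.val_injective (by rw [hh, hj0v]))
      rw [dV_zero (by omega) (by omega) (by omega), zero_mul]),
    Fintype.sum_eq_single j0 (fun j hj => by
      have hjv : (j : ℕ) ≠ (i : ℕ) - 1 := fun hh => hj (Fin.val_injective (by rw [hh, hj0v]))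
      rw [nV_zero (by omega) (by omega), zero_mul])]
    rw [dV_r23 (i := i) (j := j0) (by omega), nV_one (i := i) (j := j0) (by omega), one_mul]
    by_cases hk : 3 ≤ (i : ℕ) ∧ (k : ℕ) + 2 = (i : ℕ)
    · rw [nV_one (i := j0) (j := k) (by omega), mul_one, dV_r23 (i := j0) (j := k) (by omega)]
    · rw [nV_zero (i := j0) (j := k) (by omega) (by omega), mul_zero,
        dV_zero (i := j0) (j := k) (by omega) (by omega) (by omega)]
  · -- i = l + 1
    set j0 : Fin (l + 2) := ⟨l, by omega⟩ with hj0
    have hj0v : (j0 : ℕ) = l := rfl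
    rw [Fintype.sum_eq_single j0 (fun j hj => by
      have hjv : (j : ℕ) ≠ l := fun hh => hj (Fin.val_injective (by rw [hh, hj0v]))
      rw [dV_zero (by omega) (by omega) (by omega), zero_mul]),
    Fintype.sum_eq_single j0 (fun j hj => by
      have hjv : (j : ℕ) ≠ l := fun hh => hj (Fin.val_injective (by rw [hh, hj0v]))
      rw [nV_zero (by omega) (by omega), zero_mul])]
    rw [dV_r123 (i := i) (j := j0) (by omega), nV_r1 (i := i) (j := j0) (by omega)]
    by_cases hk : 2 ≤ l ∧ (k : ℕ) + 1 = l
    · rw [nV_one (i := j0) (j := k) (by omega), mul_one,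
        dV_r23 (i := j0) (j := k) (by omega), T.r1_r23]
    · rw [nV_zero (i := j0) (j := k) (by omega) (by omega), mul_zero,
        dV_zero (i := j0) (j := k) (by omega) (by omega) (by omega), mul_zero]

lemma comm_DF (T : TorusAlg A) (l : ℕ) (hl : 1 ≤ l) :
    Matrix.of (dV T l) * Matrix.of (fV T l) = Matrix.of (fV T l) * Matrix.of (dV T l) := by
  rw [fV_decomp, mul_add, add_mul, mul_one, one_mul, comm_ND T l hl]

/-- `matPow` computes matrix powers. -/
lemma matPow_eq_pow {n : Type} [Fintype n] [DecidableEq n] (F : n → n → A) (m : ℕ) :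
    matPow F m = fun i j => ((Matrix.of F) ^ m) i j := by
  induction m with
  | zero =>
    funext i j
    simp [matPow, matId, Matrix.one_apply]
  | succ m ih =>
    funext i k
    simp only [matPow, matComp, ih, pow_succ']
    rw [Matrix.mul_apply]
    rfl

lemma nV_ne_zero {i j : Fin (l + 2)} (h : nV T l i j ≠ 0) : (j : ℕ) + 1 = (i : ℕ) := by
  by_contra hc
  exact h (nV_zero (by omega) (by omega))

lemma nV_pow_supp (T : TorusAlg A) (l : ℕ) (hl : 1 ≤ l) (m : ℕ) :
    ∀ i j : Fin (l + 2), ((Matrix.of (nV T l)) ^ (m + 1)) i j ≠ 0 →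
      (j : ℕ) + (m + 1) = (i : ℕ) ∧ 1 ≤ (j : ℕ) := by
  induction m with
  | zero =>
    intro i j h
    rw [pow_one] at h
    have h1 : (j : ℕ) + 1 = (i : ℕ) := nV_ne_zero h
    have h2 : 1 ≤ (j : ℕ) := by
      by_contra hc
      exact h (nV_zero (by omega) (by omega))
    exact ⟨h1, h2⟩
  | succ m ih =>
    intro i j h
    rw [pow_succ', Matrix.mul_apply] at h
    obtain ⟨c, -, hc⟩ := Finset.exists_ne_zero_of_sum_ne_zero h
    have hN : (Matrix.of (nV T l)) i c ≠ 0 := fun hz => hc (by rw [hz, zero_mul])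
    have hP : ((Matrix.of (nV T l)) ^ (m + 1)) c j ≠ 0 := fun hz => hc (by rw [hz, mul_zero])
    have h1 : (c : ℕ) + 1 = (i : ℕ) := nV_ne_zero hN
    obtain ⟨h2, h3⟩ := ih c j hP
    exact ⟨by omega, h3⟩

lemma nV_nilpotent (T : TorusAlg A) (l : ℕ) (hl : 1 ≤ l) :
    (Matrix.of (nV T l)) ^ (l + 1) = 0 := by
  ext i j
  rw [Matrix.zero_apply]
  by_contra h
  obtain ⟨h1, h2⟩ := nV_pow_supp T l hl l i j h
  have := i.isLt
  omega

lemma sq_one_add {n : Type} [Fintype n] [DecidableEq n]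
    (P : Matrix n n A) : (1 + P) * (1 + P) = 1 + P * P := by
  have hP : P + P = 0 := by
    ext i j
    rw [Matrix.add_apply, Matrix.zero_apply]
    exact aux9_add_self _
  calc (1 + P) * (1 + P) = 1 + ((P + P) + P * P) := by noncomm_ring
    _ = 1 + P * P := by rw [hP, zero_add]

lemma fV_pow_two (T : TorusAlg A) (l : ℕ) (k : ℕ) :
    (Matrix.of (fV T l)) ^ (2 ^ k) = 1 + (Matrix.of (nV T l)) ^ (2 ^ k) := by
  induction k with
  | zero => simpa [pow_one] using fV_decomp T l
  | succ k ih =>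
    have h2 : 2 ^ (k + 1) = 2 ^ k + 2 ^ k := by
      rw [pow_succ]; omega
    rw [h2, pow_add, pow_add, ih, sq_one_add]

lemma matMap_matMap {n : Type} [Fintype n] (F G : n → n → A) (v : n → A) :
    matMap G (matMap F v) = matMap (matComp F G) v := by
  funext k
  simp only [matMap, matComp, LinearMap.coe_mk, AddHom.coe_mk, Finset.sum_mul,
    Finset.mul_sum, mul_assoc]
  exact Finset.sum_comm

lemma matMap_id {n : Type} [Fintype n] [DecidableEq n] (v : n → A) :
    matMap (matId : n → n → A) v = v := by
  funext k
  simp only [matMap, matId, LinearMap.coe_mk, AddHom.coe_mk, mul_ite, mul_one, mul_zero]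
  simp [Finset.sum_ite_eq']

lemma end_pow (T : TorusAlg A) (l : ℕ) (n : ℕ) (v : Fin (l + 2) → A) :
    ((matMap (fV T l) : Module.End A (Fin (l + 2) → A)) ^ n) v =
      matMap (matPow (fV T l) n) v := by
  induction n generalizing v with
  | zero =>
    rw [pow_zero]
    show v = matMap (matPow (fV T l) 0) v
    rw [matPow]
    exact (matMap_id v).symm
  | succ n ih =>
    rw [pow_succ, Module.End.mul_apply, ih, matMap_matMap]
    rfl

end Aux9

theorem statement9 (A : Type) [Ring A] [Algebra (ZMod 2) A] (T : TorusAlg A)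
    (l : ℕ) (hl : 1 ≤ l) :
    -- `φ` is a chain map
    IsChainMap (dV T l) (dV T l) (fV T l) ∧
    -- some `ν`-fold composite of `φ` is the identity morphism
    (∃ ν : ℕ, 1 ≤ ν ∧ matPow (fV T l) ν = matId) ∧
    -- consequently the direct limit of the direct system is isomorphic to `A₀`,
    -- compatibly with the induced differentials
    (∃ Dlim : Module.DirectLimit (R := A) (fun _ : ℕ => (Fin (l + 2) → A)) (connV T l) →ₗ[A]
          Module.DirectLimit (R := A) (fun _ : ℕ => (Fin (l + 2) → A)) (connV T l),
      (∀ (i : ℕ) (v : Fin (l + 2) → A),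
        Dlim (Module.DirectLimit.of A ℕ (fun _ : ℕ => (Fin (l + 2) → A)) (connV T l) i v) =
          Module.DirectLimit.of A ℕ (fun _ : ℕ => (Fin (l + 2) → A)) (connV T l) i
            (matMap (dV T l) v)) ∧
      ∃ e : Module.DirectLimit (R := A) (fun _ : ℕ => (Fin (l + 2) → A)) (connV T l) ≃ₗ[A]
          (Fin (l + 2) → A),
        ∀ z, e (Dlim z) = matMap (dV T l) (e z)) := by
  classical
  have hDF := comm_DF T l hl
  -- Part 1: chain map
  have hchain : IsChainMap (dV T l) (dV T l) (fV T l) := by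
    funext i k
    show (∑ j, fV T l i j * dV T l j k) + (∑ j, dV T l i j * fV T l j k) = 0
    have h1 : (Matrix.of (fV T l) * Matrix.of (dV T l)) i k
        = ∑ j, fV T l i j * dV T l j k := by
      rw [Matrix.mul_apply]; rfl
    have h2 : (Matrix.of (dV T l) * Matrix.of (fV T l)) i k
        = ∑ j, dV T l i j * fV T l j k := by
      rw [Matrix.mul_apply]; rfl
    rw [← h1, ← h2, hDF]
    exact aux9_add_self _
  -- Part 2: the 2^l-fold composite of φ is the identity
  have hlt : l + 1 ≤ 2 ^ l := Nat.lt_two_pow_self (n := l)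
  have hN0 : (Matrix.of (nV T l)) ^ (2 ^ l) = 0 := by
    have hsplit : 2 ^ l = (l + 1) + (2 ^ l - (l + 1)) := by omega
    rw [hsplit, pow_add, nV_nilpotent T l hl, zero_mul]
  have hF1 : (Matrix.of (fV T l)) ^ (2 ^ l) = 1 := by
    rw [fV_pow_two, hN0, add_zero]
  have hpow : matPow (fV T l) (2 ^ l) = matId := by
    rw [matPow_eq_pow]
    funext i j
    rw [hF1]
    simp [matId, Matrix.one_apply]
  -- Part 3 preparations
  set ν : ℕ := 2 ^ l with hν
  have hν1 : 1 ≤ ν := Nat.one_le_two_pow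
  set T1 : Module.End A (Fin (l + 2) → A) := matMap (fV T l) with hT1
  set Dm : Module.End A (Fin (l + 2) → A) := matMap (dV T l) with hDm
  have hT1ν : T1 ^ ν = 1 := by
    apply LinearMap.ext
    intro v
    rw [hT1, hν, end_pow, hpow, matMap_id]
    rfl
  have hcomm : Commute Dm T1 := by
    show Dm * T1 = T1 * Dm
    apply LinearMap.ext
    intro v
    show Dm (T1 v) = T1 (Dm v)
    rw [hT1, hDm, matMap_matMap (fV T l) (dV T l) v, matMap_matMap (dV T l) (fV T l) v]
    have hc : matComp (fV T l) (dV T l) = matComp (dV T l) (fV T l) := by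
      funext i k
      have h := congrArg (fun M : Matrix (Fin (l+2)) (Fin (l+2)) A => M i k) hDF
      simp only [Matrix.mul_apply, Matrix.of_apply] at h
      show (∑ j, fV T l i j * dV T l j k) = ∑ j, dV T l i j * fV T l j k
      exact h.symm
    rw [hc]
  have hcommpow : ∀ n : ℕ, Dm * T1 ^ n = T1 ^ n * Dm := fun n => hcomm.pow_right n
  have hcommpow' : ∀ (n : ℕ) (v : Fin (l + 2) → A),
      Dm ((T1 ^ n) v) = (T1 ^ n) (Dm v) := by
    intro n v
    simpa [Module.End.mul_apply] using DFunLike.congr_fun (hcommpow n) v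
  have hconn : ∀ (i j : ℕ) (hij : i ≤ j) (x : Fin (l + 2) → A),
      connV T l i j hij x = (T1 ^ (j - i)) x := fun i j hij x => rfl
  set G := fun _ : ℕ => (Fin (l + 2) → A) with hG
  set of' := Module.DirectLimit.of A ℕ G (connV T l) with hof
  have Hg : ∀ (i j : ℕ) (hij : i ≤ j) (x : Fin (l + 2) → A),
      (of' j ∘ₗ Dm) (connV T l i j hij x) = (of' i ∘ₗ Dm) x := by
    intro i j hij x
    show of' j (Dm (connV T l i j hij x)) = of' i (Dm x)
    rw [hconn, hcommpow', ← hconn i j hij (Dm x)]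
    exact Module.DirectLimit.of_f
  set Dlim := Module.DirectLimit.lift A ℕ G (connV T l) (fun i => of' i ∘ₗ Dm) Hg with hDlim
  have hDlim_of : ∀ (i : ℕ) (v : Fin (l + 2) → A),
      Dlim (of' i v) = of' i (Dm v) := by
    intro i v
    rw [hDlim, Module.DirectLimit.lift_of]
    rfl
  have hTper : ∀ a d : ℕ, T1 ^ (a + d * ν) = T1 ^ a := by
    intro a d
    rw [pow_add, mul_comm d ν, pow_mul, hT1ν, one_pow, mul_one]
  set g : ∀ i : ℕ, G i →ₗ[A] (Fin (l + 2) → A) := fun i => T1 ^ (i * (ν - 1)) with hg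
  have Hg2 : ∀ (i j : ℕ) (hij : i ≤ j) (x : Fin (l + 2) → A),
      g j (connV T l i j hij x) = g i x := by
    intro i j hij x
    rw [hconn]
    show (T1 ^ (j * (ν - 1)) * T1 ^ (j - i)) x = (T1 ^ (i * (ν - 1))) x
    rw [← pow_add]
    obtain ⟨d, rfl⟩ := Nat.exists_eq_add_of_le hij
    have hkey : (i + d) * (ν - 1) + (i + d - i) = i * (ν - 1) + d * ν := by
      have h1 : i + d - i = d := by omega
      have h2 : ν - 1 + 1 = ν := by omega
      calc (i + d) * (ν - 1) + (i + d - i)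
          = i * (ν - 1) + (d * (ν - 1) + d) := by rw [h1, add_mul, add_assoc]
        _ = i * (ν - 1) + d * (ν - 1 + 1) := by rw [Nat.mul_succ]
        _ = i * (ν - 1) + d * ν := by rw [h2]
    rw [hkey, hTper]
  set e' := Module.DirectLimit.lift A ℕ G (connV T l) g Hg2 with he'
  have he'_of : ∀ (i : ℕ) (x : Fin (l + 2) → A),
      e' (of' i x) = (T1 ^ (i * (ν - 1))) x := by
    intro i x
    rw [he', Module.DirectLimit.lift_of]
  have hinv1 : e' ∘ₗ of' 0 = LinearMap.id := by
    apply LinearMap.ext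
    intro v
    show e' (of' 0 v) = v
    rw [he'_of, Nat.zero_mul, pow_zero]
    rfl
  have hinv2 : of' 0 ∘ₗ e' = LinearMap.id := by
    apply LinearMap.ext
    intro z
    show of' 0 (e' z) = z
    induction z using Module.DirectLimit.induction_on with
    | ih i x =>
      rw [he'_of]
      have h1 : of' 0 ((T1 ^ (i * (ν - 1))) x)
          = of' i (connV T l 0 i (Nat.zero_le i) ((T1 ^ (i * (ν - 1))) x)) :=
        (Module.DirectLimit.of_f (hij := Nat.zero_le i)).symm
      rw [h1, hconn]
      have h2 : (T1 ^ (i - 0)) ((T1 ^ (i * (ν - 1))) x) = x := by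
        show (T1 ^ (i - 0) * T1 ^ (i * (ν - 1))) x = x
        have h4 : i - 0 + i * (ν - 1) = 0 + i * ν := by
          have h5 : ν - 1 + 1 = ν := by omega
          calc i - 0 + i * (ν - 1) = i * (ν - 1) + i := by omega
            _ = i * (ν - 1 + 1) := by rw [Nat.mul_succ]
            _ = 0 + i * ν := by rw [h5, Nat.zero_add]
        rw [← pow_add, h4, hTper, pow_zero]
        rfl
      rw [h2]
  refine ⟨hchain, ⟨2 ^ l, Nat.one_le_two_pow, hpow⟩, Dlim, hDlim_of, ?_⟩
  refine ⟨LinearEquiv.ofLinear e' (of' 0) hinv1 hinv2, ?_⟩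
  intro z
  induction z using Module.DirectLimit.induction_on with
  | ih i x =>
    show e' (Dlim (of' i x)) = Dm (e' (of' i x))
    rw [hDlim_of, he'_of, he'_of]
    exact (hcommpow' _ x).symm
end
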